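/- In type C_n (n ≥ 2), the vectors w₁ = v₁⊗v₁, w₂ = v₁⊗v₂ − r v₂⊗v₁, and w₃ = Σ_{i=1}^{n} (r^{i−1} v_i⊗v_{i'} − r^{n} s^{i−n−1} v_{i'}⊗v_i) are highest weight vectors: for every 1 ≤ i ≤ n, the operator Δe_i := e_i ⊗ Id + ω_i ⊗ e_i on V ⊗ V annihilates w₁, w₂, and w₃. -/

import Mathlib

open Finset Matrix Kronecker

namespace TwoParamQG

variable {K : Type*} [Field K]

/-- The `N × N` matrix unit `E_{i j}` (with 1-based indices `i, j`). -/
def Eu (N i j : ℕ) : Matrix (Fin N) (Fin N) K :=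
  Matrix.of fun a b => if ((a : ℕ) + 1 = i ∧ (b : ℕ) + 1 = j) then (1 : K) else 0

/-- Standard basis vector `v_i` of `K^N` (1-based index `i`). -/
def bv (N i : ℕ) : Fin N → K := fun a => if (a : ℕ) + 1 = i then (1 : K) else 0

/-- The tensor `v_i ⊗ v_j` in `K^N ⊗ K^N`. -/
def bvv (N i j : ℕ) : Fin N × Fin N → K := fun p => bv N i p.1 * bv N j p.2

/-- `i ↦ i' = N + 1 - i` for `N = 2n` (type `C_n`). -/
def pC (n i : ℕ) : ℕ := 2 * n + 1 - i

/-- Type `C_n` generator matrix `e_i` on `K^{2n}`. -/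
def eC (n i : ℕ) : Matrix (Fin (2 * n)) (Fin (2 * n)) K :=
  if i = n then Eu (2 * n) n (pC n n)
  else Eu (2 * n) i (i + 1) - Eu (2 * n) (pC n (i + 1)) (pC n i)

/-- Type `C_n` generator matrix `f_i` on `K^{2n}`. -/
def fC (n : ℕ) (r s : K) (i : ℕ) : Matrix (Fin (2 * n)) (Fin (2 * n)) K :=
  if i = n then (r * s)⁻¹ • Eu (2 * n) (pC n n) n
  else Eu (2 * n) (i + 1) i - (r * s)⁻¹ • Eu (2 * n) (pC n i) (pC n (i + 1))

/-- Type `C_n` generator matrix `ω_i` on `K^{2n}`. -/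
def ωC (n : ℕ) (r s : K) (i : ℕ) : Matrix (Fin (2 * n)) (Fin (2 * n)) K :=
  if i = n then
    (r * s⁻¹) • Eu (2 * n) n n + (r⁻¹ * s) • Eu (2 * n) (pC n n) (pC n n)
      + (∑ j ∈ Finset.Icc 1 (n - 1),
          ((r⁻¹ * s⁻¹) • Eu (2 * n) j j + (r * s) • Eu (2 * n) (pC n j) (pC n j)))
  else
    r • Eu (2 * n) i i + s • Eu (2 * n) (i + 1) (i + 1)
      + r⁻¹ • Eu (2 * n) (pC n i) (pC n i) + s⁻¹ • Eu (2 * n) (pC n (i + 1)) (pC n (i + 1))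
      + (∑ j ∈ (Finset.Icc 1 n).filter (fun j => j ≠ i ∧ j ≠ i + 1),
          (Eu (2 * n) j j + Eu (2 * n) (pC n j) (pC n j)))

/-- Type `C_n` generator matrix `ω'_i` on `K^{2n}`. -/
def ω'C (n : ℕ) (r s : K) (i : ℕ) : Matrix (Fin (2 * n)) (Fin (2 * n)) K :=
  if i = n then
    (r⁻¹ * s) • Eu (2 * n) n n + (r * s⁻¹) • Eu (2 * n) (pC n n) (pC n n)
      + (∑ j ∈ Finset.Icc 1 (n - 1),
          ((r⁻¹ * s⁻¹) • Eu (2 * n) j j + (r * s) • Eu (2 * n) (pC n j) (pC n j)))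
  else
    s • Eu (2 * n) i i + r • Eu (2 * n) (i + 1) (i + 1)
      + s⁻¹ • Eu (2 * n) (pC n i) (pC n i) + r⁻¹ • Eu (2 * n) (pC n (i + 1)) (pC n (i + 1))
      + (∑ j ∈ (Finset.Icc 1 n).filter (fun j => j ≠ i ∧ j ≠ i + 1),
          (Eu (2 * n) j j + Eu (2 * n) (pC n j) (pC n j)))

def tv {N : ℕ} (x y : Fin N → K) : Fin N × Fin N → K := fun p => x p.1 * y p.2

lemma bvv_eq_tv (N i j : ℕ) : bvv N i j = tv (bv N i) (bv (K := K) N j) := rfl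

@[simp] lemma tv_zero_left {N : ℕ} (y : Fin N → K) : tv 0 y = 0 := by
  funext p; simp [tv]
@[simp] lemma tv_zero_right {N : ℕ} (x : Fin N → K) : tv x 0 = 0 := by
  funext p; simp [tv]
lemma tv_smul_left {N : ℕ} (c : K) (x y : Fin N → K) : tv (c • x) y = c • tv x y := by
  funext p; simp [tv, mul_assoc]
lemma tv_smul_right {N : ℕ} (c : K) (x y : Fin N → K) : tv x (c • y) = c • tv x y := by
  funext p; simp [tv]; ring
lemma tv_neg_left {N : ℕ} (x y : Fin N → K) : tv (-x) y = -tv x y := by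
  funext p; simp [tv]
lemma tv_neg_right {N : ℕ} (x y : Fin N → K) : tv x (-y) = -tv x y := by
  funext p; simp [tv]

lemma kron_mulVec_tv {N : ℕ} (A B : Matrix (Fin N) (Fin N) K) (x y : Fin N → K) :
    (A ⊗ₖ B).mulVec (tv x y) = tv (A.mulVec x) (B.mulVec y) := by
  funext p
  simp only [Matrix.mulVec, dotProduct, Matrix.kroneckerMap_apply, tv]
  rw [Finset.sum_mul_sum, Fintype.sum_prod_type]
  apply Finset.sum_congr rfl; intro a _; apply Finset.sum_congr rfl; intro b _; ring

lemma sum_mulVec' {N : ℕ} {α : Type*} (s : Finset α) (f : α → Matrix (Fin N) (Fin N) K)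
    (x : Fin N → K) : (∑ j ∈ s, f j).mulVec x = ∑ j ∈ s, (f j).mulVec x := by
  classical
  induction s using Finset.induction_on with
  | empty => simp [Matrix.zero_mulVec]
  | insert _ _ h ih => rw [Finset.sum_insert h, Finset.sum_insert h, Matrix.add_mulVec, ih]

lemma mulVec_sum' {m : Type*} [Fintype m] [DecidableEq m] {α : Type*} (A : Matrix m m K) (s : Finset α)
    (f : α → m → K) : A.mulVec (∑ j ∈ s, f j) = ∑ j ∈ s, A.mulVec (f j) := by
  classical
  induction s using Finset.induction_on with
  | empty => simp [Matrix.mulVec_zero]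
  | insert _ _ h ih => rw [Finset.sum_insert h, Finset.sum_insert h, Matrix.mulVec_add, ih]


lemma Eu_mulVec_bv_ne {N a b i : ℕ} (h : b ≠ i) :
    (Eu N a b : Matrix (Fin N) (Fin N) K).mulVec (bv N i) = 0 := by
  funext x
  simp only [Matrix.mulVec, dotProduct, Eu, bv, Matrix.of_apply, Pi.zero_apply]
  apply Finset.sum_eq_zero
  intro y _
  split_ifs with h1 h2 <;> simp_all

lemma Eu_mulVec_bv_eq {N a b : ℕ} (h1 : 1 ≤ b) (h2 : b ≤ N) :
    (Eu N a b : Matrix (Fin N) (Fin N) K).mulVec (bv N b) = bv N a := by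
  funext x
  simp only [Matrix.mulVec, dotProduct, Eu, bv, Matrix.of_apply]
  rw [Finset.sum_eq_single (⟨b - 1, by omega⟩ : Fin N)]
  · simp only []
    have : ((⟨b - 1, by omega⟩ : Fin N) : ℕ) + 1 = b := by simp; omega
    rw [this]
    split_ifs with h3 h4 <;> simp_all
  · intro y _ hy
    have : (y : ℕ) + 1 ≠ b := by
      intro hc; apply hy; apply Fin.ext; simp; omega
    simp [this]
  · intro h; exact absurd (Finset.mem_univ _) h

section acts
variable {n : ℕ}

lemma eC_lt_low {i k : ℕ} (hi : 1 ≤ i) (hin : i < n) (hk1 : 1 ≤ k) (hk : k ≤ n) :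
    (eC n i : Matrix (Fin (2*n)) (Fin (2*n)) K).mulVec (bv (2*n) k)
      = if k = i + 1 then bv (2*n) i else 0 := by
  rw [eC, if_neg (by omega), Matrix.sub_mulVec]
  by_cases h : k = i + 1
  · subst h
    rw [Eu_mulVec_bv_eq (by omega) (by omega), Eu_mulVec_bv_ne (by simp only [pC]; omega),
      if_pos rfl, sub_zero]
  · rw [Eu_mulVec_bv_ne (by omega), Eu_mulVec_bv_ne (by simp only [pC]; omega), if_neg h, sub_zero]

lemma eC_lt_high {i k : ℕ} (hi : 1 ≤ i) (hin : i < n) (hk1 : 1 ≤ k) (hk : k ≤ n) :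
    (eC n i : Matrix (Fin (2*n)) (Fin (2*n)) K).mulVec (bv (2*n) (pC n k))
      = if k = i then -bv (2*n) (pC n (i + 1)) else 0 := by
  rw [eC, if_neg (by omega), Matrix.sub_mulVec]
  by_cases h : k = i
  · subst h
    rw [Eu_mulVec_bv_eq (by simp only [pC]; omega) (by simp only [pC]; omega),
      Eu_mulVec_bv_ne (by simp only [pC]; omega), if_pos rfl, zero_sub]
  · rw [Eu_mulVec_bv_ne (by simp only [pC]; omega), Eu_mulVec_bv_ne (by simp only [pC]; omega),
      if_neg h, sub_zero]

lemma eC_n_low {k : ℕ} (hn : 1 ≤ n) (hk1 : 1 ≤ k) (hk : k ≤ n) :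
    (eC n n : Matrix (Fin (2*n)) (Fin (2*n)) K).mulVec (bv (2*n) k) = 0 := by
  rw [eC, if_pos rfl, Eu_mulVec_bv_ne (by simp only [pC]; omega)]

lemma eC_n_high {k : ℕ} (hn : 1 ≤ n) (hk1 : 1 ≤ k) (hk : k ≤ n) :
    (eC n n : Matrix (Fin (2*n)) (Fin (2*n)) K).mulVec (bv (2*n) (pC n k))
      = if k = n then bv (2*n) n else 0 := by
  rw [eC, if_pos rfl]
  by_cases h : k = n
  · subst h
    rw [Eu_mulVec_bv_eq (by simp only [pC]; omega) (by simp only [pC]; omega), if_pos rfl]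
  · rw [Eu_mulVec_bv_ne (by simp only [pC]; omega), if_neg h]

lemma ωC_lt_self {i : ℕ} (r s : K) (hi : 1 ≤ i) (hin : i < n) :
    (ωC n r s i).mulVec (bv (2*n) i) = r • bv (2*n) i := by
  rw [ωC, if_neg (by omega), Matrix.add_mulVec, Matrix.add_mulVec, Matrix.add_mulVec,
    Matrix.add_mulVec, Matrix.smul_mulVec, Matrix.smul_mulVec,
    Matrix.smul_mulVec, Matrix.smul_mulVec, sum_mulVec']
  rw [Eu_mulVec_bv_eq (by omega) (by omega), Eu_mulVec_bv_ne (by omega),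
    Eu_mulVec_bv_ne (by simp only [pC]; omega), Eu_mulVec_bv_ne (by simp only [pC]; omega)]
  rw [Finset.sum_eq_zero]
  · simp
  · intro j hj
    simp only [Finset.mem_filter, Finset.mem_Icc] at hj
    rw [Matrix.add_mulVec, Eu_mulVec_bv_ne (by omega), Eu_mulVec_bv_ne (by simp only [pC]; omega)]
    simp

lemma ωC_lt_succ' {i : ℕ} (r s : K) (hi : 1 ≤ i) (hin : i < n) :
    (ωC n r s i).mulVec (bv (2*n) (pC n (i+1))) = s⁻¹ • bv (2*n) (pC n (i+1)) := by
  rw [ωC, if_neg (by omega), Matrix.add_mulVec, Matrix.add_mulVec, Matrix.add_mulVec,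
    Matrix.add_mulVec, Matrix.smul_mulVec, Matrix.smul_mulVec,
    Matrix.smul_mulVec, Matrix.smul_mulVec, sum_mulVec']
  rw [Eu_mulVec_bv_ne (by simp only [pC]; omega), Eu_mulVec_bv_ne (by simp only [pC]; omega),
    Eu_mulVec_bv_ne (by simp only [pC]; omega),
    Eu_mulVec_bv_eq (by simp only [pC]; omega) (by simp only [pC]; omega)]
  rw [Finset.sum_eq_zero]
  · simp
  · intro j hj
    simp only [Finset.mem_filter, Finset.mem_Icc] at hj
    rw [Matrix.add_mulVec, Eu_mulVec_bv_ne (by simp only [pC]; omega),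
      Eu_mulVec_bv_ne (by simp only [pC]; omega)]
    simp

lemma ωC_n_self (r s : K) (hn : 1 ≤ n) :
    (ωC n r s n).mulVec (bv (2*n) n) = (r * s⁻¹) • bv (2*n) n := by
  rw [ωC, if_pos rfl, Matrix.add_mulVec, Matrix.add_mulVec, Matrix.smul_mulVec,
    Matrix.smul_mulVec, sum_mulVec']
  rw [Eu_mulVec_bv_eq (by omega) (by omega), Eu_mulVec_bv_ne (by simp only [pC]; omega)]
  rw [Finset.sum_eq_zero]
  · simp
  · intro j hj
    simp only [Finset.mem_Icc] at hj
    rw [Matrix.add_mulVec, Matrix.smul_mulVec, Matrix.smul_mulVec,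
      Eu_mulVec_bv_ne (by omega), Eu_mulVec_bv_ne (by simp only [pC]; omega)]
    simp

end acts

theorem typeC_highest_weight_vectors
    (n : ℕ) (hn : 2 ≤ n) (r s : K) (hr : r ≠ 0) (hs : s ≠ 0) (hrs : r ^ 2 ≠ s ^ 2)
    (i : ℕ) (hi1 : 1 ≤ i) (hi2 : i ≤ n) :
    (eC n i ⊗ₖ (1 : Matrix (Fin (2 * n)) (Fin (2 * n)) K)
        + ωC n r s i ⊗ₖ eC n i).mulVec (bvv (2 * n) 1 1) = 0 ∧
    (eC n i ⊗ₖ (1 : Matrix (Fin (2 * n)) (Fin (2 * n)) K)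
        + ωC n r s i ⊗ₖ eC n i).mulVec
        (bvv (2 * n) 1 2 - r • bvv (2 * n) 2 1) = 0 ∧
    (eC n i ⊗ₖ (1 : Matrix (Fin (2 * n)) (Fin (2 * n)) K)
        + ωC n r s i ⊗ₖ eC n i).mulVec
        (∑ k ∈ Finset.Icc 1 n,
          ((r ^ (k - 1)) • bvv (2 * n) k (pC n k)
            - (r ^ n * s ^ ((k : ℤ) - (n : ℤ) - 1)) • bvv (2 * n) (pC n k) k)) = 0 := by
  have hNn : 1 ≤ n := by omega
  have he1 : (eC n i : Matrix (Fin (2*n)) (Fin (2*n)) K).mulVec (bv (2*n) 1) = 0 := by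
    by_cases h : i = n
    · subst h; exact eC_n_low hNn le_rfl hNn
    · rw [eC_lt_low hi1 (by omega) le_rfl hNn, if_neg (by omega)]
  refine ⟨?_, ?_, ?_⟩
  · rw [Matrix.add_mulVec, bvv_eq_tv, kron_mulVec_tv, kron_mulVec_tv, he1]
    simp
  · have he2 : (eC n i : Matrix (Fin (2*n)) (Fin (2*n)) K).mulVec (bv (2*n) 2)
        = if i = 1 then bv (2*n) 1 else 0 := by
      by_cases h : i = n
      · subst h; rw [eC_n_low hNn (by omega) hn, if_neg (by omega)]
      · rw [eC_lt_low hi1 (by omega) (by omega) hn]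
        by_cases h1 : i = 1
        · rw [if_pos (by omega), if_pos h1, h1]
        · rw [if_neg (by omega), if_neg h1]
    rw [Matrix.mulVec_sub, Matrix.mulVec_smul, Matrix.add_mulVec, Matrix.add_mulVec,
      bvv_eq_tv, bvv_eq_tv, kron_mulVec_tv, kron_mulVec_tv, kron_mulVec_tv, kron_mulVec_tv,
      Matrix.one_mulVec, Matrix.one_mulVec, he1, he2]
    by_cases h1 : i = 1
    · rw [if_pos h1, h1, ωC_lt_self r s le_rfl (by omega)]
      simp [tv_smul_left]
    · rw [if_neg h1]
      simp
  · rw [mulVec_sum']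
    by_cases hin : i = n
    · subst hin
      apply Finset.sum_eq_zero
      intro k hk
      simp only [Finset.mem_Icc] at hk
      have hEl : (eC i i : Matrix (Fin (2*i)) (Fin (2*i)) K) *ᵥ bv (2*i) k = 0 :=
        eC_n_low hNn hk.1 hk.2
      have hEh : (eC i i : Matrix (Fin (2*i)) (Fin (2*i)) K) *ᵥ bv (2*i) (pC i k)
          = if k = i then bv (2*i) i else 0 := eC_n_high hNn hk.1 hk.2
      simp only [bvv_eq_tv, Matrix.mulVec_sub, Matrix.mulVec_smul, Matrix.add_mulVec,
        kron_mulVec_tv, Matrix.one_mulVec, hEl, hEh, tv_zero_left, tv_zero_right,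
        add_zero, zero_add]
      by_cases h : k = i
      · subst h
        rw [if_pos rfl, ωC_n_self r s hNn]
        have hs1 : (s : K) ^ ((k:ℤ) - k - 1) = s⁻¹ := by
          rw [show ((k:ℤ) - k - 1) = -1 by ring, _root_.zpow_neg_one]
        have hc : r ^ (k-1) * (r * s⁻¹) = r ^ k * s⁻¹ := by
          rw [← mul_assoc, ← pow_succ]
          congr 2
          omega
        rw [tv_smul_left, smul_smul, hc, hs1, sub_self]
      · rw [if_neg h]
        simp
    · have hilt : i < n := by omega
      have hEa : (eC n i : Matrix (Fin (2*n)) (Fin (2*n)) K) *ᵥ bv (2*n) i = 0 := by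
        rw [eC_lt_low hi1 hilt hi1 hi2, if_neg (by omega)]
      have hEb : (eC n i : Matrix (Fin (2*n)) (Fin (2*n)) K) *ᵥ bv (2*n) (i+1)
          = bv (2*n) i := by
        rw [eC_lt_low hi1 hilt (by omega) (by omega), if_pos rfl]
      have hEc : (eC n i : Matrix (Fin (2*n)) (Fin (2*n)) K) *ᵥ bv (2*n) (pC n i)
          = -bv (2*n) (pC n (i+1)) := by
        rw [eC_lt_high hi1 hilt hi1 hi2, if_pos rfl]
      have hEd : (eC n i : Matrix (Fin (2*n)) (Fin (2*n)) K) *ᵥ bv (2*n) (pC n (i+1)) = 0 := by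
        rw [eC_lt_high hi1 hilt (by omega) (by omega), if_neg (by omega)]
      rw [← Finset.sum_subset (s₁ := ({i, i+1} : Finset ℕ))
        (by intro x hx
            simp only [Finset.mem_insert, Finset.mem_singleton] at hx
            simp only [Finset.mem_Icc]
            omega)]
      · rw [Finset.sum_insert (by simp), Finset.sum_singleton]
        simp only [bvv_eq_tv, Matrix.mulVec_sub, Matrix.mulVec_smul, Matrix.add_mulVec,
          kron_mulVec_tv, Matrix.one_mulVec, hEa, hEb, hEc, hEd,
          ωC_lt_self r s hi1 hilt, ωC_lt_succ' r s hi1 hilt,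
          tv_zero_left, tv_zero_right, tv_smul_left, tv_neg_left, tv_neg_right,
          smul_neg, smul_smul, add_zero, zero_add]
        have h1 : r ^ (i-1) * r = r ^ i := by
          rw [← pow_succ]; congr 1; omega
        have h2 : r ^ n * s ^ (((i+1:ℕ):ℤ) - n - 1) * s⁻¹ = r ^ n * s ^ ((i:ℤ) - n - 1) := by
          rw [mul_assoc, ← _root_.zpow_neg_one, ← zpow_add₀ hs]
          congr 2
          push_cast; ring
        rw [h1, h2, Nat.add_sub_cancel]
        abel
      · intro k hk hk2
        simp only [Finset.mem_Icc] at hk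
        simp only [Finset.mem_insert, Finset.mem_singleton] at hk2
        have hEl : (eC n i : Matrix (Fin (2*n)) (Fin (2*n)) K) *ᵥ bv (2*n) k = 0 := by
          rw [eC_lt_low hi1 hilt hk.1 hk.2, if_neg (by omega)]
        have hEh : (eC n i : Matrix (Fin (2*n)) (Fin (2*n)) K) *ᵥ bv (2*n) (pC n k) = 0 := by
          rw [eC_lt_high hi1 hilt hk.1 hk.2, if_neg (by omega)]
        simp only [bvv_eq_tv, Matrix.mulVec_sub, Matrix.mulVec_smul, Matrix.add_mulVec,
          kron_mulVec_tv, Matrix.one_mulVec, hEl, hEh, tv_zero_left, tv_zero_right,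
          add_zero, zero_add, smul_zero, sub_zero]


end TwoParamQG
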